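/- Let X_n = Σ_{i=0}^∞ a_i ε_{n−i} be a linear process with Σ_{i=0}^∞ |a_i|^γ < ∞ for some γ ∈ (0,1], suppose E|e^{iλε₁} − φ_ε(λ)|² ≤ c₀(|λ|^{2γ} ∧ 1) for all λ ∈ ℝ and some constant c₀ > 0, and suppose that for some β ≥ γ the function u ↦ u^β φ_ε(u) belongs to L¹(ℝ) ∩ L^∞(ℝ). Then there exists a constant c > 0 depending only on a₀ and γ such that for all n ∈ ℕ and all u, v ∈ ℝ: Σ_{1 ≤ i, j ≤ n} |H_{ij}(u,v)| ≤ c n. -/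

import Mathlib

open MeasureTheory ProbabilityTheory Complex

/-- The characteristic function of a real random variable `Y` on `(Ω, μ)`:
`t ↦ E[exp(I t Y)]`. -/
noncomputable def charFn {Ω : Type*} [MeasurableSpace Ω] (μ : Measure Ω) (Y : Ω → ℝ) (t : ℝ) : ℂ :=
  ∫ ω, Complex.exp (Complex.I * (t * Y ω : ℝ)) ∂μ

/-- `H_{ij}(u,v) = E[e^{iuX_i + ivX_j}] − φ(u)φ(v)` where `φ` is the characteristic function
of `X_1`. -/
noncomputable def Hfun {Ω : Type*} [MeasurableSpace Ω] (μ : Measure Ω) (X : ℤ → Ω → ℝ)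
    (i j : ℕ) (u v : ℝ) : ℂ :=
  (∫ ω, Complex.exp (Complex.I * (u * X i ω + v * X j ω : ℝ)) ∂μ)
    - charFn μ (X 1) u * charFn μ (X 1) v

section Aux
variable {Ω : Type*} [MeasurableSpace Ω] {μ : Measure Ω} [IsProbabilityMeasure μ]

lemma norm_exp_I_real (x : ℝ) : ‖Complex.exp (Complex.I * (x : ℝ))‖ = 1 := by
  rw [mul_comm, Complex.norm_exp_ofReal_mul_I]

lemma measurable_expI : Measurable fun x : ℝ => Complex.exp (Complex.I * (x : ℝ)) :=
  Complex.measurable_exp.comp ((Complex.measurable_ofReal).const_mul _)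

lemma continuous_expI : Continuous fun x : ℝ => Complex.exp (Complex.I * (x : ℝ)) :=
  Complex.continuous_exp.comp (continuous_const.mul Complex.continuous_ofReal)

lemma integrable_expI {Y : Ω → ℝ} (hY : Measurable Y) :
    Integrable (fun ω => Complex.exp (Complex.I * (Y ω : ℝ))) μ := by
  refine (integrable_const (1:ℝ)).mono' (measurable_expI.comp hY).aestronglyMeasurable ?_
  exact Filter.Eventually.of_forall fun ω => by rw [norm_exp_I_real]

lemma norm_charFn_le_one (Y : Ω → ℝ) (t : ℝ) : ‖charFn μ Y t‖ ≤ 1 := by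
  refine (norm_integral_le_integral_norm _).trans ?_
  have : ∀ ω, ‖Complex.exp (Complex.I * (t * Y ω : ℝ))‖ = (fun _ : Ω => (1:ℝ)) ω :=
    fun ω => norm_exp_I_real _
  rw [integral_congr_ae (Filter.Eventually.of_forall this)]
  simp

end Aux

section Aux2
variable {Ω : Type*} [MeasurableSpace Ω] {μ : Measure Ω} [IsProbabilityMeasure μ]

lemma indep_integral_mul_complex {W Z : Ω → ℂ} (h : IndepFun W Z μ)
    (hW : Integrable W μ) (hZ : Integrable Z μ) (hWZ : Integrable (fun ω => W ω * Z ω) μ) :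
    ∫ ω, W ω * Z ω ∂μ = (∫ ω, W ω ∂μ) * ∫ ω, Z ω ∂μ := by
  have hrr : IndepFun (fun ω => (W ω).re) (fun ω => (Z ω).re) μ :=
    h.comp Complex.measurable_re Complex.measurable_re
  have hri : IndepFun (fun ω => (W ω).re) (fun ω => (Z ω).im) μ :=
    h.comp Complex.measurable_re Complex.measurable_im
  have hir : IndepFun (fun ω => (W ω).im) (fun ω => (Z ω).re) μ :=
    h.comp Complex.measurable_im Complex.measurable_re
  have hii : IndepFun (fun ω => (W ω).im) (fun ω => (Z ω).im) μ :=
    h.comp Complex.measurable_im Complex.measurable_im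
  have iWr : Integrable (fun ω => (W ω).re) μ := hW.re
  have iWi : Integrable (fun ω => (W ω).im) μ := hW.im
  have iZr : Integrable (fun ω => (Z ω).re) μ := hZ.re
  have iZi : Integrable (fun ω => (Z ω).im) μ := hZ.im
  have irr := hrr.integral_mul_eq_mul_integral iWr.aestronglyMeasurable iZr.aestronglyMeasurable
  have iri := hri.integral_mul_eq_mul_integral iWr.aestronglyMeasurable iZi.aestronglyMeasurable
  have iir := hir.integral_mul_eq_mul_integral iWi.aestronglyMeasurable iZr.aestronglyMeasurable
  have iii := hii.integral_mul_eq_mul_integral iWi.aestronglyMeasurable iZi.aestronglyMeasurable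
  have jrr : Integrable (fun ω => (W ω).re * (Z ω).re) μ := hrr.integrable_mul iWr iZr
  have jri : Integrable (fun ω => (W ω).re * (Z ω).im) μ := hri.integrable_mul iWr iZi
  have jir : Integrable (fun ω => (W ω).im * (Z ω).re) μ := hir.integrable_mul iWi iZr
  have jii : Integrable (fun ω => (W ω).im * (Z ω).im) μ := hii.integrable_mul iWi iZi
  rw [← integral_re_add_im hWZ, ← integral_re_add_im hW, ← integral_re_add_im hZ]
  simp only [RCLike.re_to_complex, RCLike.im_to_complex, RCLike.I_to_complex]
  have hre : (fun ω => (W ω * Z ω).re) = fun ω => (W ω).re * (Z ω).re - (W ω).im * (Z ω).im := by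
    funext ω; exact Complex.mul_re _ _
  have him : (fun ω => (W ω * Z ω).im) = fun ω => (W ω).re * (Z ω).im + (W ω).im * (Z ω).re := by
    funext ω; exact Complex.mul_im _ _
  rw [hre, him, integral_sub jrr jii, integral_add jri jir]
  rw [show (∫ ω, (W ω).re * (Z ω).re ∂μ) = (∫ ω, (W ω).re ∂μ) * ∫ ω, (Z ω).re ∂μ from irr,
    show (∫ ω, (W ω).re * (Z ω).im ∂μ) = (∫ ω, (W ω).re ∂μ) * ∫ ω, (Z ω).im ∂μ from iri,
    show (∫ ω, (W ω).im * (Z ω).re ∂μ) = (∫ ω, (W ω).im ∂μ) * ∫ ω, (Z ω).re ∂μ from iir,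
    show (∫ ω, (W ω).im * (Z ω).im ∂μ) = (∫ ω, (W ω).im ∂μ) * ∫ ω, (Z ω).im ∂μ from iii]
  apply Complex.ext <;> simp <;> ring

lemma charFn_ident {ε : ℤ → Ω → ℝ} (hident : ∀ i, IdentDistrib (ε i) (ε 1) μ μ)
    (l : ℤ) (t : ℝ) : charFn μ (ε l) t = charFn μ (ε 1) t := by
  have hm : Measurable fun x : ℝ => Complex.exp (Complex.I * (t * x : ℝ)) :=
    Complex.measurable_exp.comp ((Complex.measurable_ofReal.comp (measurable_id.const_mul t)).const_mul Complex.I)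
  exact ((hident l).comp hm).integral_eq

lemma norm_prod_sub_prod_le (N : ℕ) (A B : ℕ → ℂ) (hA : ∀ k, ‖A k‖ ≤ 1) (hB : ∀ k, ‖B k‖ ≤ 1) :
    ‖(∏ k ∈ Finset.range N, A k) - ∏ k ∈ Finset.range N, B k‖
      ≤ ∑ k ∈ Finset.range N, ‖A k - B k‖ := by
  induction N with
  | zero => simp
  | succ N ih =>
    rw [Finset.prod_range_succ, Finset.prod_range_succ, Finset.sum_range_succ]
    have key : (∏ k ∈ Finset.range N, A k) * A N - (∏ k ∈ Finset.range N, B k) * B N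
        = (∏ k ∈ Finset.range N, A k) * (A N - B N)
          + ((∏ k ∈ Finset.range N, A k) - ∏ k ∈ Finset.range N, B k) * B N := by ring
    rw [key]
    refine (norm_add_le _ _).trans ?_
    rw [norm_mul, norm_mul]
    have h1 : ‖∏ k ∈ Finset.range N, A k‖ ≤ 1 := by
      rw [norm_prod]
      exact Finset.prod_le_one (fun k _ => norm_nonneg _) (fun k _ => hA k)
    have t1 : ‖∏ k ∈ Finset.range N, A k‖ * ‖A N - B N‖ ≤ ‖A N - B N‖ := by
      nlinarith [norm_nonneg (A N - B N)]
    have t2 : ‖(∏ k ∈ Finset.range N, A k) - ∏ k ∈ Finset.range N, B k‖ * ‖B N‖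
        ≤ ∑ k ∈ Finset.range N, ‖A k - B k‖ := by
      have := mul_le_mul ih (hB N) (norm_nonneg _)
        (Finset.sum_nonneg fun k _ => norm_nonneg _)
      simpa using this
    linarith

lemma min_rpow_half {x : ℝ} (hx : 0 ≤ x) :
    (min (x ^ (2:ℝ)) 1) ^ ((1:ℝ)/2) = min x 1 := by
  have h2 : min (x ^ (2:ℝ)) 1 = (min x 1) ^ (2:ℝ) := by
    rcases le_total x 1 with h | h
    · rw [min_eq_left h, min_eq_left]
      exact Real.rpow_le_one hx h (by norm_num)
    · rw [min_eq_right h, min_eq_right, Real.one_rpow]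
      rw [show (1:ℝ) = 1 ^ (2:ℝ) by rw [Real.one_rpow]]
      exact Real.rpow_le_rpow (by norm_num) h (by norm_num)
  rw [h2, ← Real.rpow_mul (le_min (by positivity) zero_le_one)]
  norm_num

end Aux2

section Aux3
variable {Ω : Type*} [MeasurableSpace Ω] {μ : Measure Ω} [IsProbabilityMeasure μ]
  {ε : ℤ → Ω → ℝ}

lemma integral_exp_weighted_sum (hmeas : ∀ i, Measurable (ε i))
    (hindep : iIndepFun ε μ)
    (hident : ∀ i, IdentDistrib (ε i) (ε 1) μ μ)
    (n : ℤ) (d : ℕ → ℝ) (Q : ℕ) :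
    ∫ ω, Complex.exp (Complex.I * ((∑ k ∈ Finset.range Q, d k * ε (n - k) ω : ℝ) : ℂ)) ∂μ
      = ∏ k ∈ Finset.range Q, charFn μ (ε 1) (d k) := by
  induction Q with
  | zero => simp
  | succ Q ih =>
    set c : ℤ → ℝ := fun l => d (n - l).toNat with hc
    set h : ℤ → Ω → ℝ := fun l ω => c l * ε l ω with hh
    have hhmeas : ∀ l, Measurable (h l) := fun l => (hmeas l).const_mul (c l)
    have hih : iIndepFun h μ :=
      hindep.comp (fun l x => c l * x) (fun l => measurable_id.const_mul (c l))
    set s : Finset ℤ := (Finset.range Q).image (fun k : ℕ => n - (k : ℤ)) with hs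
    have hinj : ∀ x ∈ Finset.range Q, ∀ y ∈ Finset.range Q,
        n - (x:ℤ) = n - (y:ℤ) → x = y := by intro x _ y _ e; omega
    have hnot : n - (Q:ℤ) ∉ s := by
      simp only [hs, Finset.mem_image, Finset.mem_range]
      rintro ⟨k, hk, e⟩
      omega
    have hval : ∀ k : ℕ, c (n - (k:ℤ)) = d k := by
      intro k; simp only [hc, sub_sub_cancel, Int.toNat_natCast]
    have hsum_eq : ∀ ω, (∑ l ∈ s, h l ω) = ∑ k ∈ Finset.range Q, d k * ε (n - k) ω := by
      intro ω
      rw [hs, Finset.sum_image hinj]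
      exact Finset.sum_congr rfl fun k _ => by rw [hh]; simp only [hval]
    have hInd0 : IndepFun (∑ l ∈ s, h l) (h (n - (Q:ℤ))) μ :=
      hih.indepFun_finsetSum_of_notMem hhmeas hnot
    set eI : ℝ → ℂ := fun x => Complex.exp (Complex.I * (x : ℝ)) with heI
    have hIndWZ : IndepFun (fun ω => eI ((∑ l ∈ s, h l) ω)) (fun ω => eI (h (n - (Q:ℤ)) ω)) μ :=
      hInd0.comp measurable_expI measurable_expI
    have hWeq : (fun ω => eI ((∑ l ∈ s, h l) ω))
        = fun ω => eI (∑ k ∈ Finset.range Q, d k * ε (n - k) ω) := by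
      funext ω; rw [Finset.sum_apply, hsum_eq]
    have hZeq : (fun ω => eI (h (n - (Q:ℤ)) ω)) = fun ω => eI (d Q * ε (n - Q) ω) := by
      funext ω; rw [hh]; simp only [hval]
    -- measurability of the sums
    have hmW : Measurable fun ω => (∑ k ∈ Finset.range Q, d k * ε (n - k) ω) :=
      Finset.measurable_sum _ (fun k _ => (hmeas _).const_mul _)
    have hmZ : Measurable fun ω => d Q * ε (n - Q) ω := (hmeas _).const_mul _
    have hmWZ : Measurable fun ω => (∑ k ∈ Finset.range (Q+1), d k * ε (n - k) ω) :=
      Finset.measurable_sum _ (fun k _ => (hmeas _).const_mul _)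
    have split : (fun ω => eI (∑ k ∈ Finset.range (Q+1), d k * ε (n - k) ω))
        = fun ω => eI (∑ k ∈ Finset.range Q, d k * ε (n - k) ω) * eI (d Q * ε (n - Q) ω) := by
      funext ω
      rw [Finset.sum_range_succ, heI]
      simp only []
      rw [← Complex.exp_add]
      congr 1
      push_cast
      ring
    have hIndWZ' : IndepFun (fun ω => eI (∑ k ∈ Finset.range Q, d k * ε (n - k) ω))
        (fun ω => eI (d Q * ε (n - Q) ω)) μ := by
      rw [← hWeq, ← hZeq]; exact hIndWZ
    calc ∫ ω, eI (∑ k ∈ Finset.range (Q+1), d k * ε (n - k) ω) ∂μ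
        = ∫ ω, eI (∑ k ∈ Finset.range Q, d k * ε (n - k) ω) * eI (d Q * ε (n - Q) ω) ∂μ := by
          rw [split]
      _ = (∫ ω, eI (∑ k ∈ Finset.range Q, d k * ε (n - k) ω) ∂μ)
            * ∫ ω, eI (d Q * ε (n - Q) ω) ∂μ := by
          refine indep_integral_mul_complex hIndWZ' (integrable_expI hmW) (integrable_expI hmZ) ?_
          have := integrable_expI (μ := μ) hmWZ
          rwa [split] at this
      _ = (∏ k ∈ Finset.range Q, charFn μ (ε 1) (d k)) * charFn μ (ε 1) (d Q) := by
          rw [ih]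
          congr 1
          exact charFn_ident hident _ _
      _ = ∏ k ∈ Finset.range (Q+1), charFn μ (ε 1) (d k) := (Finset.prod_range_succ _ _).symm

end Aux3

section Aux4
variable {Ω : Type*} [MeasurableSpace Ω] {μ : Measure Ω} [IsProbabilityMeasure μ]
  {ε : ℤ → Ω → ℝ}

/-- Cauchy–Schwarz covariance bound for the characteristic function of `ε 1`. -/
lemma cov_bound (hmeas1 : Measurable (ε 1)) {c₀ γ : ℝ} (hc₀ : 0 < c₀)
    (hcha : ∀ lam : ℝ,
      (∫ ω, ‖Complex.exp (Complex.I * (lam * ε 1 ω : ℝ)) - charFn μ (ε 1) lam‖ ^ 2 ∂μ)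
        ≤ c₀ * min (|lam| ^ (2 * γ)) 1)
    (s t : ℝ) :
    ‖charFn μ (ε 1) (s + t) - charFn μ (ε 1) s * charFn μ (ε 1) t‖
      ≤ c₀ * (min (|s| ^ γ) 1 * min (|t| ^ γ) 1) := by
  set Φ := charFn μ (ε 1) with hΦ
  set es : Ω → ℂ := fun ω => Complex.exp (Complex.I * (s * ε 1 ω : ℝ)) with hes
  set et : Ω → ℂ := fun ω => Complex.exp (Complex.I * (t * ε 1 ω : ℝ)) with het
  have hmes : Measurable fun ω => s * ε 1 ω := hmeas1.const_mul s
  have hmet : Measurable fun ω => t * ε 1 ω := hmeas1.const_mul t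
  have hmest : Measurable fun ω => (s + t) * ε 1 ω := hmeas1.const_mul (s+t)
  have ies : Integrable es μ := integrable_expI hmes
  have iet : Integrable et μ := integrable_expI hmet
  have hprod : ∀ ω, es ω * et ω = Complex.exp (Complex.I * ((s + t) * ε 1 ω : ℝ)) := by
    intro ω
    rw [hes, het]
    simp only []
    rw [← Complex.exp_add]
    congr 1
    push_cast
    ring
  -- expansion: ∫ (es - Φ s)(et - Φ t) = Φ(s+t) - Φ s Φ t
  have hexp : ∫ ω, (es ω - Φ s) * (et ω - Φ t) ∂μ = Φ (s + t) - Φ s * Φ t := by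
    have e1 : ∀ ω, (es ω - Φ s) * (et ω - Φ t)
        = Complex.exp (Complex.I * ((s + t) * ε 1 ω : ℝ)) - Φ s * et ω
          - (es ω * Φ t - Φ s * Φ t) := by
      intro ω; rw [← hprod ω]; ring
    calc ∫ ω, (es ω - Φ s) * (et ω - Φ t) ∂μ
        = ∫ ω, (Complex.exp (Complex.I * ((s + t) * ε 1 ω : ℝ)) - Φ s * et ω
            - (es ω * Φ t - Φ s * Φ t)) ∂μ := by
          exact integral_congr_ae (Filter.Eventually.of_forall e1)
      _ = Φ (s + t) - Φ s * Φ t := by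
          have I2 : Integrable (fun ω => Φ s * et ω) μ := by exact iet.const_mul (Φ s)
          have I3 : Integrable (fun ω => es ω * Φ t) μ := by exact ies.mul_const (Φ t)
          have I1 : Integrable
              (fun ω => Complex.exp (Complex.I * ((s + t) * ε 1 ω : ℝ)) - Φ s * et ω) μ := by
            exact (integrable_expI hmest).sub I2
          have I4 : Integrable (fun ω => es ω * Φ t - Φ s * Φ t) μ := by
            exact I3.sub (integrable_const _)
          rw [integral_sub I1 I4,
            integral_sub (integrable_expI hmest) I2,
            integral_sub I3 (integrable_const _),
            integral_const_mul, integral_mul_const, integral_const]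
          simp only [probReal_univ, one_smul]
          have : ∫ ω, Complex.exp (Complex.I * ((s + t) * ε 1 ω : ℝ)) ∂μ = Φ (s+t) := rfl
          rw [this]
          have h2 : ∫ ω, et ω ∂μ = Φ t := rfl
          have h3 : ∫ ω, es ω ∂μ = Φ s := rfl
          rw [h2, h3]
          ring
  -- Cauchy–Schwarz
  have hCS : ‖∫ ω, (es ω - Φ s) * (et ω - Φ t) ∂μ‖
      ≤ (∫ ω, ‖es ω - Φ s‖ ^ 2 ∂μ) ^ ((1:ℝ)/2) * (∫ ω, ‖et ω - Φ t‖ ^ 2 ∂μ) ^ ((1:ℝ)/2) := by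
    refine (norm_integral_le_integral_norm _).trans ?_
    have hnorm : ∀ ω, ‖(es ω - Φ s) * (et ω - Φ t)‖ = ‖es ω - Φ s‖ * ‖et ω - Φ t‖ :=
      fun ω => norm_mul _ _
    rw [integral_congr_ae (Filter.Eventually.of_forall hnorm)]
    have hconj : Real.HolderConjugate 2 2 := Real.HolderConjugate.two_two
    have asm_s : AEStronglyMeasurable (fun ω => ‖es ω - Φ s‖) μ :=
      ((measurable_expI.comp hmes).sub measurable_const).norm.aestronglyMeasurable
    have asm_t : AEStronglyMeasurable (fun ω => ‖et ω - Φ t‖) μ :=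
      ((measurable_expI.comp hmet).sub measurable_const).norm.aestronglyMeasurable
    have hb : ∀ (e' : Ω → ℂ) (z : ℂ), (∀ ω, ‖e' ω‖ = 1) → ‖z‖ ≤ 1 →
        ∀ ω, ‖(fun ω => ‖e' ω - z‖) ω‖ ≤ (2:ℝ) := by
      intro e' z he hz ω
      rw [Real.norm_eq_abs, _root_.abs_of_nonneg (norm_nonneg _)]
      calc ‖e' ω - z‖ ≤ ‖e' ω‖ + ‖z‖ := norm_sub_le _ _
        _ ≤ 1 + 1 := by rw [he ω]; linarith
        _ = 2 := by norm_num
    have mem_s : MemLp (fun ω => ‖es ω - Φ s‖) (ENNReal.ofReal 2) μ :=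
      (memLp_top_of_bound asm_s 2 (Filter.Eventually.of_forall
        (hb es (Φ s) (fun ω => norm_exp_I_real _) (norm_charFn_le_one _ _)))).mono_exponent le_top
    have mem_t : MemLp (fun ω => ‖et ω - Φ t‖) (ENNReal.ofReal 2) μ :=
      (memLp_top_of_bound asm_t 2 (Filter.Eventually.of_forall
        (hb et (Φ t) (fun ω => norm_exp_I_real _) (norm_charFn_le_one _ _)))).mono_exponent le_top
    have := integral_mul_le_Lp_mul_Lq_of_nonneg hconj
      (Filter.Eventually.of_forall fun ω => norm_nonneg _)
      (Filter.Eventually.of_forall fun ω => norm_nonneg _) mem_s mem_t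
    have hpow : ∀ (f : Ω → ℂ) , (∫ ω, ‖f ω‖ ^ (2:ℝ) ∂μ) = ∫ ω, ‖f ω‖ ^ 2 ∂μ := by
      intro f
      refine integral_congr_ae (Filter.Eventually.of_forall fun ω => ?_)
      show ‖f ω‖ ^ (2:ℝ) = ‖f ω‖ ^ (2:ℕ)
      rw [← Real.rpow_natCast (‖f ω‖) 2]
      norm_num
    rw [hpow, hpow] at this
    exact this
  rw [hexp] at hCS
  refine hCS.trans ?_
  -- bound each factor
  have key : ∀ r : ℝ, (∫ ω, ‖Complex.exp (Complex.I * (r * ε 1 ω : ℝ)) - Φ r‖ ^ 2 ∂μ) ^ ((1:ℝ)/2)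
      ≤ c₀ ^ ((1:ℝ)/2) * min (|r| ^ γ) 1 := by
    intro r
    have h1 : (∫ ω, ‖Complex.exp (Complex.I * (r * ε 1 ω : ℝ)) - Φ r‖ ^ 2 ∂μ) ^ ((1:ℝ)/2)
        ≤ (c₀ * min (|r| ^ (2*γ)) 1) ^ ((1:ℝ)/2) := by
      apply Real.rpow_le_rpow ?_ (hcha r) (by norm_num)
      exact integral_nonneg fun ω => by positivity
    refine h1.trans ?_
    rw [Real.mul_rpow hc₀.le (le_min (by positivity) zero_le_one)]
    have h2 : |r| ^ (2*γ) = (|r| ^ γ) ^ (2:ℝ) := by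
      rw [mul_comm, Real.rpow_mul (abs_nonneg r)]
    rw [h2, min_rpow_half (by positivity)]
  calc (∫ ω, ‖es ω - Φ s‖ ^ 2 ∂μ) ^ ((1:ℝ)/2) * (∫ ω, ‖et ω - Φ t‖ ^ 2 ∂μ) ^ ((1:ℝ)/2)
      ≤ (c₀ ^ ((1:ℝ)/2) * min (|s| ^ γ) 1) * (c₀ ^ ((1:ℝ)/2) * min (|t| ^ γ) 1) := by
        apply mul_le_mul (key s) (key t) ?_ ?_
        · exact Real.rpow_nonneg (integral_nonneg fun ω => by positivity) _
        · positivity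
    _ = c₀ * (min (|s| ^ γ) 1 * min (|t| ^ γ) 1) := by
        rw [show c₀ ^ ((1:ℝ)/2) * min (|s| ^ γ) 1 * (c₀ ^ ((1:ℝ)/2) * min (|t| ^ γ) 1)
          = (c₀ ^ ((1:ℝ)/2) * c₀ ^ ((1:ℝ)/2)) * (min (|s| ^ γ) 1 * min (|t| ^ γ) 1) by ring,
          ← Real.rpow_add hc₀]
        norm_num

lemma tendsto_integral_expI {Y : Ω → ℝ} {S : ℕ → Ω → ℝ} (hS : ∀ P, Measurable (S P))
    (hae : ∀ᵐ ω ∂μ, Filter.Tendsto (fun P => S P ω) Filter.atTop (nhds (Y ω))) :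
    Filter.Tendsto (fun P => ∫ ω, Complex.exp (Complex.I * (S P ω : ℝ)) ∂μ) Filter.atTop
      (nhds (∫ ω, Complex.exp (Complex.I * (Y ω : ℝ)) ∂μ)) := by
  refine tendsto_integral_of_dominated_convergence (fun _ => (1:ℝ))
    (fun P => (measurable_expI.comp (hS P)).aestronglyMeasurable) (integrable_const 1)
    (fun P => Filter.Eventually.of_forall fun ω => by rw [norm_exp_I_real]) ?_
  filter_upwards [hae] with ω hω
  exact (continuous_expI.tendsto (Y ω)).comp hω

end Aux4

section Aux5

lemma K_bound {a0 γ β C : ℝ} (ha0 : a0 ≠ 0) (hγ : 0 < γ) (hγβ : γ ≤ β)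
    (Φ : ℝ → ℂ) (hΦ1 : ∀ s, ‖Φ s‖ ≤ 1) (hC : ∀ s : ℝ, |s| ^ β * ‖Φ s‖ ≤ C) (t : ℝ) :
    |t| ^ γ * ‖Φ (t * a0)‖ ≤ |a0| ^ (-γ) * (1 + C) := by
  have ha0' : (0:ℝ) < |a0| := abs_pos.2 ha0
  have hC0 : 0 ≤ C := le_trans (by positivity) (hC 0)
  have hKpos : (0:ℝ) < |a0| ^ (-γ) := Real.rpow_pos_of_pos ha0' _
  rcases le_or_gt (|t * a0|) 1 with h | h
  · have ht : |t| ≤ |a0|⁻¹ := by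
      rw [abs_mul] at h
      rw [← one_div]
      exact (le_div_iff₀ ha0').mpr h
    have h1 : |t| ^ γ ≤ (|a0|⁻¹) ^ γ := Real.rpow_le_rpow (abs_nonneg _) ht hγ.le
    have h2 : (|a0|⁻¹) ^ γ = |a0| ^ (-γ) := by
      rw [Real.inv_rpow (abs_nonneg _), Real.rpow_neg (abs_nonneg _)]
    have h3 : |t| ^ γ * ‖Φ (t * a0)‖ ≤ |a0| ^ (-γ) * 1 := by
      rw [← h2]
      exact mul_le_mul h1 (hΦ1 _) (norm_nonneg _) (by positivity)
    refine h3.trans ?_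
    nlinarith
  · have e1 : |t| ^ γ = |a0| ^ (-γ) * |t * a0| ^ γ := by
      rw [abs_mul, Real.mul_rpow (abs_nonneg t) (abs_nonneg a0)]
      rw [← mul_assoc, mul_comm (|a0| ^ (-γ)), mul_assoc, ← Real.rpow_add ha0']
      simp
    have e2 : |t * a0| ^ γ ≤ |t * a0| ^ β := Real.rpow_le_rpow_of_exponent_le h.le hγβ
    calc |t| ^ γ * ‖Φ (t * a0)‖ = |a0| ^ (-γ) * (|t * a0| ^ γ * ‖Φ (t * a0)‖) := by
          rw [e1]; ring
      _ ≤ |a0| ^ (-γ) * (|t * a0| ^ β * ‖Φ (t * a0)‖) := by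
          refine mul_le_mul_of_nonneg_left ?_ hKpos.le
          exact mul_le_mul_of_nonneg_right e2 (norm_nonneg _)
      _ ≤ |a0| ^ (-γ) * C := mul_le_mul_of_nonneg_left (hC _) hKpos.le
      _ ≤ |a0| ^ (-γ) * (1 + C) := by nlinarith

end Aux5

section Aux6
variable {Ω : Type*} [MeasurableSpace Ω] {μ : Measure Ω} [IsProbabilityMeasure μ]
  {ε : ℤ → Ω → ℝ}

lemma offdiag_bound
    (hmeas : ∀ i, Measurable (ε i))
    (hindep : iIndepFun ε μ)
    (hident : ∀ i, IdentDistrib (ε i) (ε 1) μ μ)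
    {a : ℕ → ℝ} {X : ℤ → Ω → ℝ}
    (hX : ∀ n : ℤ, ∀ᵐ ω ∂μ, HasSum (fun i : ℕ => a i * ε (n - i) ω) (X n ω))
    {γ c₀ K : ℝ} (hγ : 0 < γ) (hc₀ : 0 < c₀)
    (hcha : ∀ lam : ℝ,
      (∫ ω, ‖Complex.exp (Complex.I * (lam * ε 1 ω : ℝ)) - charFn μ (ε 1) lam‖ ^ 2 ∂μ)
        ≤ c₀ * min (|lam| ^ (2 * γ)) 1)
    (hsum : Summable (fun i => |a i| ^ γ))
    (hK : ∀ t : ℝ, |t| ^ γ * ‖charFn μ (ε 1) (t * a 0)‖ ≤ K)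
    (i j : ℕ) (hij : i < j) (u v : ℝ) :
    ‖Hfun μ X i j u v‖ ≤ c₀ * K * |a (j - i)| ^ γ
      + c₀ * K ^ 2 * ∑' k : ℕ, |a (k + 1)| ^ γ * |a ((j - i) + (k + 1))| ^ γ := by
  have hK0 : 0 ≤ K := by
    have := hK 0
    rwa [abs_zero, Real.zero_rpow hγ.ne', zero_mul] at this
  set m := j - i with hmdef
  have hm1 : 1 ≤ m := by omega
  have hji : (j:ℤ) = (i:ℤ) + m := by push_cast; omega
  set Φ : ℝ → ℂ := charFn μ (ε 1) with hΦdef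
  have hΦ1 : ∀ s, ‖Φ s‖ ≤ 1 := fun s => norm_charFn_le_one _ _
  set A : ℕ → ℂ := fun k => Φ (v * a (m + k) + u * a k) with hA
  set B : ℕ → ℂ := fun k => Φ (v * a (m + k)) * Φ (u * a k) with hB
  set Qc : ℂ := ∏ k ∈ Finset.range m, Φ (v * a k) with hQc
  set T : ℝ := ∑' k : ℕ, |a (k + 1)| ^ γ * |a (m + (k + 1))| ^ γ with hT
  set S : ℕ → ℤ → Ω → ℝ := fun P n ω => ∑ k ∈ Finset.range P, a k * ε (n - (k:ℤ)) ω with hS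
  have hSmeas : ∀ P n, Measurable (fun ω => S P n ω) := fun P n =>
    Finset.measurable_sum _ (fun k _ => (hmeas _).const_mul _)
  -- summability facts
  have hsum_shift : Summable (fun k : ℕ => |a (k + 1)| ^ γ) :=
    hsum.comp_injective (add_left_injective 1)
  have hMc : ∀ k : ℕ, |a k| ^ γ ≤ ∑' i : ℕ, |a i| ^ γ :=
    fun k => hsum.le_tsum k (fun j _ => by positivity)
  have hsumT : Summable (fun k : ℕ => |a (k + 1)| ^ γ * |a (m + (k + 1))| ^ γ) := by
    refine Summable.of_nonneg_of_le (fun k => by positivity) (fun k => ?_)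
      (hsum_shift.mul_right (∑' i : ℕ, |a i| ^ γ))
    exact mul_le_mul_of_nonneg_left (hMc _) (by positivity)
  have hT0 : 0 ≤ T := tsum_nonneg fun k => by positivity
  -- the joint characteristic function at finite level
  have joint_P : ∀ P : ℕ,
      ∫ ω, Complex.exp (Complex.I * ((u * S P i ω + v * S (m + P) j ω : ℝ) : ℂ)) ∂μ
        = Qc * ∏ k ∈ Finset.range P, A k := by
    intro P
    set d : ℕ → ℝ := fun k => v * a k + (if m ≤ k then u * a (k - m) else 0) with hd
    have hpt : ∀ ω, u * S P i ω + v * S (m + P) j ω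
        = ∑ k ∈ Finset.range (m + P), d k * ε ((j:ℤ) - k) ω := by
      intro ω
      have expand : ∀ k, d k * ε ((j:ℤ) - k) ω
          = v * a k * ε ((j:ℤ) - k) ω + (if m ≤ k then u * a (k - m) else 0) * ε ((j:ℤ) - k) ω :=
        fun k => by simp only [hd]; ring
      rw [Finset.sum_congr rfl fun k _ => expand k, Finset.sum_add_distrib]
      have h1 : ∑ k ∈ Finset.range (m + P), v * a k * ε ((j:ℤ) - k) ω = v * S (m + P) j ω := by
        rw [hS, Finset.mul_sum]
        exact Finset.sum_congr rfl fun k _ => by ring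
      have h2 : ∑ k ∈ Finset.range (m + P),
          (if m ≤ k then u * a (k - m) else 0) * ε ((j:ℤ) - k) ω = u * S P i ω := by
        rw [Finset.sum_range_add]
        have hz : ∑ k ∈ Finset.range m,
            (if m ≤ k then u * a (k - m) else 0) * ε ((j:ℤ) - k) ω = 0 := by
          refine Finset.sum_eq_zero fun k hk => ?_
          rw [if_neg (by simp at hk; omega), zero_mul]
        rw [hz, zero_add, hS, Finset.mul_sum]
        refine Finset.sum_congr rfl fun k _ => ?_
        rw [if_pos (Nat.le_add_right m k), Nat.add_sub_cancel_left]
        have : (j:ℤ) - (m + k : ℕ) = (i:ℤ) - k := by push_cast; omega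
        rw [this]; ring
      rw [h1, h2]; ring
    calc ∫ ω, Complex.exp (Complex.I * ((u * S P i ω + v * S (m + P) j ω : ℝ) : ℂ)) ∂μ
        = ∫ ω, Complex.exp (Complex.I *
            ((∑ k ∈ Finset.range (m + P), d k * ε ((j:ℤ) - k) ω : ℝ) : ℂ)) ∂μ := by
          refine integral_congr_ae (Filter.Eventually.of_forall fun ω => ?_)
          simp only [hpt]
      _ = ∏ k ∈ Finset.range (m + P), Φ (d k) :=
          integral_exp_weighted_sum hmeas hindep hident (j:ℤ) d (m + P)
      _ = Qc * ∏ k ∈ Finset.range P, A k := by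
          rw [Finset.prod_range_add]
          congr 1
          · refine Finset.prod_congr rfl fun k hk => ?_
            simp only [Finset.mem_range] at hk
            simp only [hd, if_neg (by omega : ¬ m ≤ k), add_zero]
          · refine Finset.prod_congr rfl fun k _ => ?_
            simp only [hd, hA, if_pos (Nat.le_add_right m k), Nat.add_sub_cancel_left]
  -- limits
  have htop : Filter.Tendsto (fun P : ℕ => m + P) Filter.atTop Filter.atTop := by
    simpa [add_comm] using Filter.tendsto_add_atTop_nat m
  have hchar : ∀ w : ℝ, Filter.Tendsto (fun P => ∏ k ∈ Finset.range P, Φ (w * a k))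
      Filter.atTop (nhds (charFn μ (X 1) w)) := by
    intro w
    have hper : ∀ P : ℕ, ∫ ω, Complex.exp (Complex.I * ((w * S P 1 ω : ℝ) : ℂ)) ∂μ
        = ∏ k ∈ Finset.range P, Φ (w * a k) := by
      intro P
      have hpt : ∀ ω, w * S P 1 ω = ∑ k ∈ Finset.range P, (w * a k) * ε ((1:ℤ) - k) ω := by
        intro ω; rw [hS, Finset.mul_sum]; exact Finset.sum_congr rfl fun k _ => by ring
      calc ∫ ω, Complex.exp (Complex.I * ((w * S P 1 ω : ℝ) : ℂ)) ∂μ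
          = ∫ ω, Complex.exp (Complex.I *
              ((∑ k ∈ Finset.range P, (w * a k) * ε ((1:ℤ) - k) ω : ℝ) : ℂ)) ∂μ := by
            refine integral_congr_ae (Filter.Eventually.of_forall fun ω => ?_)
            simp only [hpt]
        _ = ∏ k ∈ Finset.range P, Φ (w * a k) :=
            integral_exp_weighted_sum hmeas hindep hident 1 (fun k => w * a k) P
    have h0 : Filter.Tendsto (fun P => ∫ ω, Complex.exp (Complex.I * ((w * S P 1 ω : ℝ) : ℂ)) ∂μ)
        Filter.atTop (nhds (∫ ω, Complex.exp (Complex.I * ((w * X 1 ω : ℝ) : ℂ)) ∂μ)) := by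
      refine tendsto_integral_expI (fun P => (hSmeas P 1).const_mul w) ?_
      filter_upwards [hX 1] with ω hω
      exact (hω.tendsto_sum_nat).const_mul w
    rw [show (fun P => ∫ ω, Complex.exp (Complex.I * ((w * S P 1 ω : ℝ) : ℂ)) ∂μ)
      = fun P => ∏ k ∈ Finset.range P, Φ (w * a k) from funext hper] at h0
    exact h0
  have hTj : Filter.Tendsto (fun P => Qc * ∏ k ∈ Finset.range P, A k) Filter.atTop
      (nhds (∫ ω, Complex.exp (Complex.I * ((u * X i ω + v * X j ω : ℝ) : ℂ)) ∂μ)) := by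
    have h0 : Filter.Tendsto
        (fun P => ∫ ω, Complex.exp (Complex.I * ((u * S P i ω + v * S (m + P) j ω : ℝ) : ℂ)) ∂μ)
        Filter.atTop
        (nhds (∫ ω, Complex.exp (Complex.I * ((u * X i ω + v * X j ω : ℝ) : ℂ)) ∂μ)) := by
      refine tendsto_integral_expI
        (fun P => ((hSmeas P i).const_mul u).add ((hSmeas (m+P) j).const_mul v)) ?_
      filter_upwards [hX i, hX j] with ω h1 h2
      have t1 : Filter.Tendsto (fun P => u * S P i ω) Filter.atTop (nhds (u * X i ω)) :=
        h1.tendsto_sum_nat.const_mul u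
      have t2 : Filter.Tendsto (fun P => v * S (m + P) j ω) Filter.atTop (nhds (v * X j ω)) :=
        (h2.tendsto_sum_nat.const_mul v).comp htop
      exact t1.add t2
    rw [show (fun P => ∫ ω, Complex.exp
        (Complex.I * ((u * S P i ω + v * S (m + P) j ω : ℝ) : ℂ)) ∂μ)
      = fun P => Qc * ∏ k ∈ Finset.range P, A k from funext joint_P] at h0
    exact h0
  have hTv' : Filter.Tendsto (fun P => ∏ k ∈ Finset.range (m + P), Φ (v * a k)) Filter.atTop
      (nhds (charFn μ (X 1) v)) := (hchar v).comp htop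
  have hD : Filter.Tendsto
      (fun P => Qc * ((∏ k ∈ Finset.range P, A k) - ∏ k ∈ Finset.range P, B k))
      Filter.atTop (nhds (Hfun μ X i j u v)) := by
    have heq : (fun P => Qc * ((∏ k ∈ Finset.range P, A k) - ∏ k ∈ Finset.range P, B k))
        = fun P => (Qc * ∏ k ∈ Finset.range P, A k)
          - (∏ k ∈ Finset.range P, Φ (u * a k)) * ∏ k ∈ Finset.range (m + P), Φ (v * a k) := by
      funext P
      have h1 : ∏ k ∈ Finset.range (m + P), Φ (v * a k)
          = Qc * ∏ k ∈ Finset.range P, Φ (v * a (m + k)) := Finset.prod_range_add _ m P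
      have h2 : ∏ k ∈ Finset.range P, B k
          = (∏ k ∈ Finset.range P, Φ (v * a (m + k))) * ∏ k ∈ Finset.range P, Φ (u * a k) := by
        rw [hB, ← Finset.prod_mul_distrib]
      rw [h1, h2]; ring
    rw [heq]
    have := hTj.sub ((hchar u).mul hTv')
    exact this
  -- per-P norm bound
  have hcov : ∀ s t : ℝ, ‖Φ (s + t) - Φ s * Φ t‖ ≤ c₀ * (min (|s| ^ γ) 1 * min (|t| ^ γ) 1) :=
    cov_bound (hmeas 1) hc₀ hcha
  have habs : ∀ (w b : ℝ), min (|w * b| ^ γ) 1 ≤ |w| ^ γ * |b| ^ γ := by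
    intro w b
    refine (min_le_left _ _).trans ?_
    rw [abs_mul, Real.mul_rpow (abs_nonneg _) (abs_nonneg _)]
  have hmin1 : ∀ (w b : ℝ), min (|w * b| ^ γ) 1 ≤ 1 := fun w b => min_le_right _ _
  have hmin0 : ∀ (w b : ℝ), 0 ≤ min (|w * b| ^ γ) 1 := fun w b => le_min (by positivity) zero_le_one
  have hPb : ∀ P : ℕ,
      ‖Qc * ((∏ k ∈ Finset.range P, A k) - ∏ k ∈ Finset.range P, B k)‖
        ≤ c₀ * K * |a m| ^ γ + c₀ * K ^ 2 * T := by
    intro P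
    have hRHS0 : 0 ≤ c₀ * K * |a m| ^ γ + c₀ * K ^ 2 * T := by positivity
    match P with
    | 0 => simpa using hRHS0
    | (P' + 1) =>
      have hAle : ∀ k, ‖A k‖ ≤ 1 := fun k => hΦ1 _
      have hBle : ∀ k, ‖B k‖ ≤ 1 := fun k => by
        simp only [hB, norm_mul]
        exact mul_le_one₀ (hΦ1 _) (norm_nonneg _) (hΦ1 _)
      have hsplit : (∏ k ∈ Finset.range (P' + 1), A k) - ∏ k ∈ Finset.range (P' + 1), B k
          = (∏ k ∈ Finset.range P', A (k + 1)) * (A 0 - B 0)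
            + ((∏ k ∈ Finset.range P', A (k + 1)) - ∏ k ∈ Finset.range P', B (k + 1)) * B 0 := by
        rw [Finset.prod_range_succ', Finset.prod_range_succ']
        ring
      -- telescoping bound
      have htel : ‖(∏ k ∈ Finset.range P', A (k + 1)) - ∏ k ∈ Finset.range P', B (k + 1)‖
          ≤ ∑ k ∈ Finset.range P', ‖A (k + 1) - B (k + 1)‖ :=
        norm_prod_sub_prod_le P' _ _ (fun k => hAle _) (fun k => hBle _)
      have hsum_le : ∑ k ∈ Finset.range P', ‖A (k + 1) - B (k + 1)‖
          ≤ c₀ * (|u| ^ γ * |v| ^ γ) * T := by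
        have step : ∀ k, ‖A (k + 1) - B (k + 1)‖
            ≤ c₀ * (|u| ^ γ * |v| ^ γ) * (|a (k + 1)| ^ γ * |a (m + (k + 1))| ^ γ) := by
          intro k
          refine (hcov (v * a (m + (k+1))) (u * a (k+1))).trans ?_
          have b1 : min (|v * a (m + (k+1))| ^ γ) 1 ≤ |v| ^ γ * |a (m + (k+1))| ^ γ := habs _ _
          have b2 : min (|u * a (k+1)| ^ γ) 1 ≤ |u| ^ γ * |a (k+1)| ^ γ := habs _ _
          have := mul_le_mul b1 b2 (hmin0 _ _) (by positivity)
          calc c₀ * (min (|v * a (m + (k+1))| ^ γ) 1 * min (|u * a (k+1)| ^ γ) 1)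
              ≤ c₀ * ((|v| ^ γ * |a (m + (k+1))| ^ γ) * (|u| ^ γ * |a (k+1)| ^ γ)) :=
                mul_le_mul_of_nonneg_left this hc₀.le
            _ = c₀ * (|u| ^ γ * |v| ^ γ) * (|a (k + 1)| ^ γ * |a (m + (k + 1))| ^ γ) := by ring
        calc ∑ k ∈ Finset.range P', ‖A (k + 1) - B (k + 1)‖
            ≤ ∑ k ∈ Finset.range P',
                c₀ * (|u| ^ γ * |v| ^ γ) * (|a (k + 1)| ^ γ * |a (m + (k + 1))| ^ γ) :=
              Finset.sum_le_sum fun k _ => step k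
          _ = c₀ * (|u| ^ γ * |v| ^ γ)
                * ∑ k ∈ Finset.range P', |a (k + 1)| ^ γ * |a (m + (k + 1))| ^ γ := by
              rw [Finset.mul_sum]
          _ ≤ c₀ * (|u| ^ γ * |v| ^ γ) * T := by
              refine mul_le_mul_of_nonneg_left ?_ (by positivity)
              exact Summable.sum_le_tsum _ (fun k _ => by positivity) hsumT
      -- ‖Qc‖ ≤ ‖Φ (v * a 0)‖
      have hQcle : ‖Qc‖ ≤ ‖Φ (v * a 0)‖ := by
        have hpr := Finset.prod_range_succ' (fun k => Φ (v * a k)) (m - 1)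
        rw [Nat.sub_add_cancel hm1] at hpr
        rw [hQc, hpr, norm_mul]
        have h1 : ‖∏ k ∈ Finset.range (m - 1), Φ (v * a (k + 1))‖ ≤ 1 := by
          rw [norm_prod]
          exact Finset.prod_le_one (fun k _ => norm_nonneg _) (fun k _ => hΦ1 _)
        nlinarith [norm_nonneg (Φ (v * a 0))]
      have hB0le : ‖B 0‖ ≤ ‖Φ (u * a 0)‖ := by
        simp only [hB, norm_mul]
        nlinarith [norm_nonneg (Φ (u * a 0)), hΦ1 (v * a (m + 0)), norm_nonneg (Φ (v * a (m+0)))]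
      have hA0B0 : ‖A 0 - B 0‖ ≤ c₀ * (|v| ^ γ * |a m| ^ γ) := by
        refine (hcov (v * a (m + 0)) (u * a 0)).trans ?_
        have b1 : min (|v * a (m + 0)| ^ γ) 1 ≤ |v| ^ γ * |a m| ^ γ := by
          have := habs v (a (m + 0))
          simpa using this
        have := mul_le_mul b1 (hmin1 u (a 0)) (hmin0 _ _) (by positivity)
        calc c₀ * (min (|v * a (m + 0)| ^ γ) 1 * min (|u * a 0| ^ γ) 1)
            ≤ c₀ * ((|v| ^ γ * |a m| ^ γ) * 1) := mul_le_mul_of_nonneg_left this hc₀.le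
          _ = c₀ * (|v| ^ γ * |a m| ^ γ) := by ring
      have hApr : ‖∏ k ∈ Finset.range P', A (k + 1)‖ ≤ 1 := by
        rw [norm_prod]
        exact Finset.prod_le_one (fun k _ => norm_nonneg _) (fun k _ => hAle _)
      -- combine
      rw [hsplit, norm_mul]
      have hbig : ‖(∏ k ∈ Finset.range P', A (k + 1)) * (A 0 - B 0)
          + ((∏ k ∈ Finset.range P', A (k + 1)) - ∏ k ∈ Finset.range P', B (k + 1)) * B 0‖
          ≤ ‖A 0 - B 0‖ + (c₀ * (|u| ^ γ * |v| ^ γ) * T) * ‖B 0‖ := by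
        refine (norm_add_le _ _).trans ?_
        rw [norm_mul, norm_mul]
        have t1 : ‖∏ k ∈ Finset.range P', A (k + 1)‖ * ‖A 0 - B 0‖ ≤ ‖A 0 - B 0‖ := by
          nlinarith [norm_nonneg (A 0 - B 0)]
        have t2 : ‖(∏ k ∈ Finset.range P', A (k + 1)) - ∏ k ∈ Finset.range P', B (k + 1)‖
            * ‖B 0‖ ≤ (c₀ * (|u| ^ γ * |v| ^ γ) * T) * ‖B 0‖ :=
          mul_le_mul_of_nonneg_right (htel.trans hsum_le) (norm_nonneg _)
        linarith
      calc ‖Qc‖ * ‖(∏ k ∈ Finset.range P', A (k + 1)) * (A 0 - B 0)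
            + ((∏ k ∈ Finset.range P', A (k + 1)) - ∏ k ∈ Finset.range P', B (k + 1)) * B 0‖
          ≤ ‖Φ (v * a 0)‖ * (‖A 0 - B 0‖ + (c₀ * (|u| ^ γ * |v| ^ γ) * T) * ‖B 0‖) :=
            mul_le_mul hQcle hbig (norm_nonneg _) (norm_nonneg _)
        _ ≤ ‖Φ (v * a 0)‖ * ((c₀ * (|v| ^ γ * |a m| ^ γ))
              + (c₀ * (|u| ^ γ * |v| ^ γ) * T) * ‖Φ (u * a 0)‖) := by
            refine mul_le_mul_of_nonneg_left ?_ (norm_nonneg _)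
            have h8 := mul_le_mul_of_nonneg_left hB0le
              (by positivity : (0:ℝ) ≤ c₀ * (|u| ^ γ * |v| ^ γ) * T)
            linarith [hA0B0]
        _ = c₀ * |a m| ^ γ * (|v| ^ γ * ‖Φ (v * a 0)‖)
              + c₀ * T * ((|u| ^ γ * ‖Φ (u * a 0)‖) * (|v| ^ γ * ‖Φ (v * a 0)‖)) := by ring
        _ ≤ c₀ * |a m| ^ γ * K + c₀ * T * (K * K) := by
            have p1 : (0:ℝ) ≤ |v| ^ γ * ‖Φ (v * a 0)‖ := by positivity
            have q1 := hK v
            have q2 := hK u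
            have r1 : c₀ * |a m| ^ γ * (|v| ^ γ * ‖Φ (v * a 0)‖) ≤ c₀ * |a m| ^ γ * K :=
              mul_le_mul_of_nonneg_left q1 (by positivity)
            have r2 : (|u| ^ γ * ‖Φ (u * a 0)‖) * (|v| ^ γ * ‖Φ (v * a 0)‖) ≤ K * K :=
              mul_le_mul q2 q1 p1 hK0
            have r3 : c₀ * T * ((|u| ^ γ * ‖Φ (u * a 0)‖) * (|v| ^ γ * ‖Φ (v * a 0)‖))
                ≤ c₀ * T * (K * K) := mul_le_mul_of_nonneg_left r2 (by positivity)
            linarith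
        _ = c₀ * K * |a m| ^ γ + c₀ * K ^ 2 * T := by ring
  refine le_of_tendsto hD.norm (Filter.Eventually.of_forall fun P => hPb P)

end Aux6

section Aux7
variable {Ω : Type*} [MeasurableSpace Ω] {μ : Measure Ω} [IsProbabilityMeasure μ]

lemma Hfun_le_two (X : ℤ → Ω → ℝ) (i j : ℕ) (u v : ℝ) : ‖Hfun μ X i j u v‖ ≤ 2 := by
  unfold Hfun
  refine (norm_sub_le _ _).trans ?_
  have h1 : ‖∫ ω, Complex.exp (Complex.I * ((u * X i ω + v * X j ω : ℝ) : ℂ)) ∂μ‖ ≤ 1 := by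
    refine (norm_integral_le_integral_norm _).trans ?_
    have : ∀ ω : Ω, ‖Complex.exp (Complex.I * ((u * X i ω + v * X j ω : ℝ) : ℂ))‖
        = (fun _ : Ω => (1:ℝ)) ω := fun ω => norm_exp_I_real _
    rw [integral_congr_ae (Filter.Eventually.of_forall this)]
    simp
  have h2 : ‖charFn μ (X 1) u * charFn μ (X 1) v‖ ≤ 1 := by
    rw [norm_mul]
    exact mul_le_one₀ (norm_charFn_le_one _ _) (norm_nonneg _) (norm_charFn_le_one _ _)
  linarith

lemma Hfun_swap (X : ℤ → Ω → ℝ) (i j : ℕ) (u v : ℝ) :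
    Hfun μ X i j u v = Hfun μ X j i v u := by
  unfold Hfun
  rw [mul_comm (charFn μ (X 1) u)]
  congr 1
  refine integral_congr_ae (Filter.Eventually.of_forall fun ω => ?_)
  have h : u * X (i:ℤ) ω + v * X (j:ℤ) ω = v * X (j:ℤ) ω + u * X (i:ℤ) ω := by ring
  simp only [h]

end Aux7


/-- for a linear process `X_n = Σ_{i=0}^∞ a_i ε_{n−i}` with `Σ |a_i|^γ < ∞` for
some `γ ∈ (0,1]`, if `E|e^{iλε₁} − φ_ε(λ)|² ≤ c₀(|λ|^{2γ} ∧ 1)` for all `λ` and some `c₀ > 0`,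
and moreover `u^β φ_ε(u) ∈ L¹(ℝ) ∩ L^∞(ℝ)` for some `β ≥ γ`, then there is `c > 0`
(depending only on `a₀` and `γ`) such that `Σ_{1 ≤ i, j ≤ n} |H_{ij}(u,v)| ≤ c n` for all `n`
and all `u, v ∈ ℝ`. -/
theorem stmt5 {Ω : Type*} [MeasurableSpace Ω] (μ : Measure Ω) [IsProbabilityMeasure μ]
    (ε : ℤ → Ω → ℝ) (hmeas : ∀ i, Measurable (ε i))
    (hindep : iIndepFun ε μ)
    (hident : ∀ i, IdentDistrib (ε i) (ε 1) μ μ)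
    (a : ℕ → ℝ) (ha0 : a 0 ≠ 0)
    (X : ℤ → Ω → ℝ)
    (hX : ∀ n : ℤ, ∀ᵐ ω ∂μ, HasSum (fun i : ℕ => a i * ε (n - i) ω) (X n ω))
    (γ : ℝ) (hγ : γ ∈ Set.Ioc (0:ℝ) 1)
    (hsum : Summable (fun i => |a i| ^ γ))
    (c₀ : ℝ) (hc₀ : 0 < c₀)
    (hcha : ∀ lam : ℝ,
      (∫ ω, ‖Complex.exp (Complex.I * (lam * ε 1 ω : ℝ)) - charFn μ (ε 1) lam‖ ^ 2 ∂μ)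
        ≤ c₀ * min (|lam| ^ (2 * γ)) 1)
    (β : ℝ) (hβ : γ ≤ β)
    (hL1 : Integrable (fun u : ℝ => |u| ^ β * ‖charFn μ (ε 1) u‖) volume)
    (hLinf : ∃ C : ℝ, ∀ u : ℝ, |u| ^ β * ‖charFn μ (ε 1) u‖ ≤ C) :
    ∃ c > (0:ℝ), ∀ n : ℕ, ∀ u v : ℝ,
      (∑ i ∈ Finset.Icc 1 n, ∑ j ∈ Finset.Icc 1 n, ‖Hfun μ X i j u v‖) ≤ c * n := by
  obtain ⟨C, hC⟩ := hLinf
  have hγ0 : 0 < γ := hγ.1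
  have hβ0 : 0 < β := lt_of_lt_of_le hγ0 hβ
  have hC0 : 0 ≤ C := by
    have := hC 0
    rwa [abs_zero, Real.zero_rpow hβ0.ne', zero_mul] at this
  set K : ℝ := |a 0| ^ (-γ) * (1 + C) with hKdef
  have hK0 : 0 ≤ K := mul_nonneg (Real.rpow_nonneg (abs_nonneg _) _) (by linarith)
  have hKb : ∀ t : ℝ, |t| ^ γ * ‖charFn μ (ε 1) (t * a 0)‖ ≤ K :=
    K_bound ha0 hγ0 hβ (charFn μ (ε 1)) (fun s => norm_charFn_le_one _ _) hC
  set Asum : ℝ := ∑' i : ℕ, |a i| ^ γ with hAsum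
  have hAsum0 : 0 ≤ Asum := tsum_nonneg fun k => by positivity
  set bound : ℕ → ℝ := fun m => c₀ * K * |a m| ^ γ
    + c₀ * K ^ 2 * ∑' k : ℕ, |a (k + 1)| ^ γ * |a (m + (k + 1))| ^ γ with hbounddef
  have hsum_shift : Summable (fun k : ℕ => |a (k + 1)| ^ γ) :=
    hsum.comp_injective (add_left_injective 1)
  have hMc : ∀ k : ℕ, |a k| ^ γ ≤ Asum := fun k => hsum.le_tsum k (fun j _ => by positivity)
  have hTm : ∀ m : ℕ, Summable (fun k : ℕ => |a (k + 1)| ^ γ * |a (m + (k + 1))| ^ γ) := by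
    intro m
    refine Summable.of_nonneg_of_le (fun k => by positivity) (fun k => ?_)
      (hsum_shift.mul_right Asum)
    exact mul_le_mul_of_nonneg_left (hMc _) (by positivity)
  have hbound0 : ∀ m, 0 ≤ bound m := by
    intro m
    have h1 : 0 ≤ ∑' k : ℕ, |a (k + 1)| ^ γ * |a (m + (k + 1))| ^ γ :=
      tsum_nonneg fun k => by positivity
    have : (0:ℝ) ≤ c₀ * K * |a m| ^ γ := by positivity
    have : (0:ℝ) ≤ c₀ * K ^ 2 := by positivity
    simp only [hbounddef]
    positivity
  set Bc : ℝ := c₀ * K * Asum + c₀ * K ^ 2 * (Asum * Asum) with hBc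
  have hBc0 : 0 ≤ Bc := by positivity
  -- the sum of `bound` over any finite window is at most `Bc`
  have hsum_bound : ∀ n : ℕ, ∑ m ∈ Finset.Icc 1 n, bound m ≤ Bc := by
    intro n
    have hsplit : ∑ m ∈ Finset.Icc 1 n, bound m
        = c₀ * K * (∑ m ∈ Finset.Icc 1 n, |a m| ^ γ)
          + c₀ * K ^ 2 * ∑ m ∈ Finset.Icc 1 n,
              ∑' k : ℕ, |a (k + 1)| ^ γ * |a (m + (k + 1))| ^ γ := by
      rw [Finset.mul_sum, Finset.mul_sum, ← Finset.sum_add_distrib]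
    rw [hsplit]
    have h1 : ∑ m ∈ Finset.Icc 1 n, |a m| ^ γ ≤ Asum :=
      Summable.sum_le_tsum _ (fun k _ => by positivity) hsum
    have h2 : ∑ m ∈ Finset.Icc 1 n, ∑' k : ℕ, |a (k + 1)| ^ γ * |a (m + (k + 1))| ^ γ
        ≤ Asum * Asum := by
      rw [← Summable.tsum_finsetSum (fun m _ => hTm m)]
      have hpt : ∀ k : ℕ, ∑ m ∈ Finset.Icc 1 n, |a (k + 1)| ^ γ * |a (m + (k + 1))| ^ γ
          ≤ |a (k + 1)| ^ γ * Asum := by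
        intro k
        rw [← Finset.mul_sum]
        refine mul_le_mul_of_nonneg_left ?_ (by positivity)
        have hinj : ∀ x ∈ Finset.Icc 1 n, ∀ y ∈ Finset.Icc 1 n,
            x + (k + 1) = y + (k + 1) → x = y := by intro x _ y _ e; omega
        calc ∑ m ∈ Finset.Icc 1 n, |a (m + (k + 1))| ^ γ
            = ∑ l ∈ (Finset.Icc 1 n).image (fun m => m + (k + 1)), |a l| ^ γ :=
              (Finset.sum_image (f := fun l => |a l| ^ γ) hinj).symm
          _ ≤ Asum := Summable.sum_le_tsum _ (fun l _ => by positivity) hsum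
      have hsumL : Summable (fun k : ℕ =>
          ∑ m ∈ Finset.Icc 1 n, |a (k + 1)| ^ γ * |a (m + (k + 1))| ^ γ) := by
        refine Summable.of_nonneg_of_le
          (fun k => Finset.sum_nonneg fun m _ => by positivity) hpt
          (hsum_shift.mul_right Asum)
      calc ∑' k : ℕ, ∑ m ∈ Finset.Icc 1 n, |a (k + 1)| ^ γ * |a (m + (k + 1))| ^ γ
          ≤ ∑' k : ℕ, |a (k + 1)| ^ γ * Asum :=
            Summable.tsum_le_tsum hpt hsumL (hsum_shift.mul_right Asum)
        _ = (∑' k : ℕ, |a (k + 1)| ^ γ) * Asum := tsum_mul_right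
        _ ≤ Asum * Asum := by
            refine mul_le_mul_of_nonneg_right ?_ hAsum0
            have := hsum.tsum_eq_zero_add
            have h0 : (0:ℝ) ≤ |a 0| ^ γ := by positivity
            rw [hAsum]
            linarith [this]
    have t1 : c₀ * K * (∑ m ∈ Finset.Icc 1 n, |a m| ^ γ) ≤ c₀ * K * Asum :=
      mul_le_mul_of_nonneg_left h1 (by positivity)
    have t2 : c₀ * K ^ 2 * (∑ m ∈ Finset.Icc 1 n,
        ∑' k : ℕ, |a (k + 1)| ^ γ * |a (m + (k + 1))| ^ γ) ≤ c₀ * K ^ 2 * (Asum * Asum) :=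
      mul_le_mul_of_nonneg_left h2 (by positivity)
    rw [hBc]
    linarith
  refine ⟨2 + 2 * Bc, by linarith, fun n u v => ?_⟩
  -- pointwise bounds on `Hfun`
  have hoff : ∀ i j : ℕ, i < j → ∀ u' v' : ℝ, ‖Hfun μ X i j u' v'‖ ≤ bound (j - i) := by
    intro i j h u' v'
    exact offdiag_bound hmeas hindep hident hX hγ0 hc₀ hcha hsum hKb i j h u' v'
  -- row bound
  have hrow : ∀ i ∈ Finset.Icc 1 n, ∑ j ∈ Finset.Icc 1 n, ‖Hfun μ X i j u v‖ ≤ 2 + 2 * Bc := by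
    intro i hi
    rw [Finset.mem_Icc] at hi
    have hptw : ∀ j, ‖Hfun μ X i j u v‖ ≤ (if j < i then bound (i - j) else 0)
        + ((if j = i then 2 else 0) + (if i < j then bound (j - i) else 0)) := by
      intro j
      rcases lt_trichotomy j i with h | h | h
      · rw [if_pos h, if_neg (by omega), if_neg (by omega)]
        have := hoff j i h v u
        rw [Hfun_swap X i j u v]
        linarith
      · rw [if_neg (by omega), if_pos h, if_neg (by omega)]
        have := Hfun_le_two (μ := μ) X i j u v
        linarith
      · rw [if_neg (by omega), if_neg (by omega), if_pos h]
        have := hoff i j h u v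
        linarith
    calc ∑ j ∈ Finset.Icc 1 n, ‖Hfun μ X i j u v‖
        ≤ ∑ j ∈ Finset.Icc 1 n, ((if j < i then bound (i - j) else 0)
          + ((if j = i then 2 else 0) + (if i < j then bound (j - i) else 0))) :=
          Finset.sum_le_sum fun j _ => hptw j
      _ = (∑ j ∈ Finset.Icc 1 n, if j < i then bound (i - j) else 0)
          + ((∑ j ∈ Finset.Icc 1 n, if j = i then (2:ℝ) else 0)
            + ∑ j ∈ Finset.Icc 1 n, if i < j then bound (j - i) else 0) := by
          rw [Finset.sum_add_distrib, Finset.sum_add_distrib]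
      _ ≤ Bc + (2 + Bc) := by
          have e2 : (∑ j ∈ Finset.Icc 1 n, if j = i then (2:ℝ) else 0) ≤ 2 := by
            rw [Finset.sum_ite_eq' (Finset.Icc 1 n) i (fun _ => (2:ℝ))]
            split <;> norm_num
          have e1 : (∑ j ∈ Finset.Icc 1 n, if j < i then bound (i - j) else 0) ≤ Bc := by
            rw [← Finset.sum_filter]
            have hinj : ∀ x ∈ (Finset.Icc 1 n).filter (fun j => j < i),
                ∀ y ∈ (Finset.Icc 1 n).filter (fun j => j < i), i - x = i - y → x = y := by
              intro x hx y hy e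
              simp only [Finset.mem_filter, Finset.mem_Icc] at hx hy
              omega
            have hsub : ((Finset.Icc 1 n).filter (fun j => j < i)).image (fun j => i - j)
                ⊆ Finset.Icc 1 n := by
              intro m hm
              simp only [Finset.mem_image, Finset.mem_filter, Finset.mem_Icc] at hm
              obtain ⟨j, ⟨⟨hj1, hj2⟩, hj3⟩, rfl⟩ := hm
              rw [Finset.mem_Icc]
              omega
            calc ∑ j ∈ (Finset.Icc 1 n).filter (fun j => j < i), bound (i - j)
                = ∑ m ∈ ((Finset.Icc 1 n).filter (fun j => j < i)).image (fun j => i - j),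
                    bound m := (Finset.sum_image hinj).symm
              _ ≤ ∑ m ∈ Finset.Icc 1 n, bound m :=
                  Finset.sum_le_sum_of_subset_of_nonneg hsub (fun m _ _ => hbound0 m)
              _ ≤ Bc := hsum_bound n
          have e3 : (∑ j ∈ Finset.Icc 1 n, if i < j then bound (j - i) else 0) ≤ Bc := by
            rw [← Finset.sum_filter]
            have hinj : ∀ x ∈ (Finset.Icc 1 n).filter (fun j => i < j),
                ∀ y ∈ (Finset.Icc 1 n).filter (fun j => i < j), x - i = y - i → x = y := by
              intro x hx y hy e
              simp only [Finset.mem_filter, Finset.mem_Icc] at hx hy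
              omega
            have hsub : ((Finset.Icc 1 n).filter (fun j => i < j)).image (fun j => j - i)
                ⊆ Finset.Icc 1 n := by
              intro m hm
              simp only [Finset.mem_image, Finset.mem_filter, Finset.mem_Icc] at hm
              obtain ⟨j, ⟨⟨hj1, hj2⟩, hj3⟩, rfl⟩ := hm
              rw [Finset.mem_Icc]
              omega
            calc ∑ j ∈ (Finset.Icc 1 n).filter (fun j => i < j), bound (j - i)
                = ∑ m ∈ ((Finset.Icc 1 n).filter (fun j => i < j)).image (fun j => j - i),
                    bound m := (Finset.sum_image hinj).symm
              _ ≤ ∑ m ∈ Finset.Icc 1 n, bound m :=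
                  Finset.sum_le_sum_of_subset_of_nonneg hsub (fun m _ _ => hbound0 m)
              _ ≤ Bc := hsum_bound n
          linarith
      _ = 2 + 2 * Bc := by ring
  calc ∑ i ∈ Finset.Icc 1 n, ∑ j ∈ Finset.Icc 1 n, ‖Hfun μ X i j u v‖
      ≤ ∑ _i ∈ Finset.Icc 1 n, (2 + 2 * Bc) := Finset.sum_le_sum hrow
    _ = (Finset.Icc 1 n).card * (2 + 2 * Bc) := by rw [Finset.sum_const, nsmul_eq_mul]
    _ = n * (2 + 2 * Bc) := by rw [Nat.card_Icc]; norm_num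
    _ = (2 + 2 * Bc) * n := by ring
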